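/- With A as above and n_{a,A}, N_{a,A} := min{N ≥ 0 : n_{a,A} ∈ NA}, one has the inequality b · N_{a,A} ≥ n_{a,A} + n_{b-a, b-A}. -/
import Mathlib


/-- The `N`-fold sumset of a set of integers. -/
def nfold (A : Set ℤ) (N : ℕ) : Set ℤ :=
  {x | ∃ f : Fin N → ℤ, (∀ i, f i ∈ A) ∧ ∑ i, f i = x}

/-- Nonnegative integer combinations of the elements of a finite set of integers. -/
def combos (A : Finset ℤ) : Set ℤ :=
  {n | ∃ c : ℤ → ℕ, ∑ a ∈ A, (c a : ℤ) * a = n}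

lemma sum_mem_combos {N : ℕ} (S : Finset ℤ) (f : Fin N → ℤ) (hf : ∀ i, f i ∈ S) :
    (∑ i, f i) ∈ combos S := by
  refine ⟨fun x => (Finset.univ.filter (fun i => f i = x)).card, ?_⟩
  have h := Finset.sum_fiberwise_of_maps_to (s := Finset.univ) (t := S) (g := f) (fun i _ => hf i) (fun i => f i)
  rw [← h]
  refine Finset.sum_congr rfl fun x _ => ?_
  rw [Finset.sum_congr rfl (fun i hi => (Finset.mem_filter.mp hi).2)]
  simp [mul_comm]

/-- With `n_{a,A}` the least `n ≥ 0` with `n ≡ a (mod b)` in `P(A)`,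
`N_{a,A}` the least `N` with `n_{a,A} ∈ NA`, and `n_{b-a,b-A}` analogously, we
have `b * N_{a,A} ≥ n_{a,A} + n_{b-a,b-A}`. -/
theorem stmt7 (A : Finset ℤ) (b : ℤ) (h0 : 0 ∈ A) (hb : b ∈ A)
    (hbound : ∀ x ∈ A, 0 ≤ x ∧ x ≤ b) (hgcd : A.gcd id = 1)
    (a : ℤ) (ha0 : 0 ≤ a) (hab : a ≤ b - 1)
    (na : ℤ) (hna : IsLeast {n : ℤ | 0 ≤ n ∧ n ≡ a [ZMOD b] ∧ n ∈ combos A} na)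
    (Na : ℕ) (hNa : IsLeast {N : ℕ | na ∈ nfold (↑A) N} Na)
    (nba : ℤ)
    (hnba : IsLeast {m : ℤ | 0 ≤ m ∧ m ≡ (b - a) [ZMOD b] ∧
      m ∈ combos (A.image (fun x => b - x))} nba) :
    na + nba ≤ b * (Na : ℤ) := by
  obtain ⟨f, hf, hsum⟩ := hNa.1
  set m : ℤ := b * (Na : ℤ) - na with hm
  have hsum' : (∑ i : Fin Na, (b - f i)) = m := by
    rw [Finset.sum_sub_distrib, Finset.sum_const, hsum]
    simp [hm, mul_comm]
  have hmem : m ∈ combos (A.image (fun x => b - x)) := by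
    rw [← hsum']
    exact sum_mem_combos _ _ fun i => Finset.mem_image.mpr ⟨f i, hf i, rfl⟩
  have hm0 : 0 ≤ m := by
    have : na ≤ ∑ _i : Fin Na, b := by
      rw [← hsum]
      exact Finset.sum_le_sum fun i _ => (hbound _ (hf i)).2
    simp only [Finset.sum_const, Finset.card_univ, Fintype.card_fin, nsmul_eq_mul] at this
    simp only [hm]
    linarith
  have hmod : m ≡ (b - a) [ZMOD b] := by
    have hna' : na ≡ a [ZMOD b] := hna.1.2.1
    have : m ≡ 0 - na [ZMOD b] := by
      unfold m
      exact Int.ModEq.sub (Int.modEq_zero_iff_dvd.mpr ⟨(Na : ℤ), rfl⟩) (Int.ModEq.refl na)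
    calc m ≡ 0 - na [ZMOD b] := this
      _ ≡ 0 - a [ZMOD b] := Int.ModEq.sub (Int.ModEq.refl 0) hna'
      _ ≡ b - a [ZMOD b] := Int.ModEq.sub (Int.modEq_zero_iff_dvd.mpr ⟨1, (mul_one b).symm⟩).symm (Int.ModEq.refl a)
  have := hnba.2 ⟨hm0, hmod, hmem⟩
  omega
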